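/- arXiv:1808.10312 — 8 statements merged into one kernel-verified Lean document; each statement's English description precedes it below -/
import Mathlib

section
/- Soundness and completeness of the Logic of Approximate Entailment: for any theory T and any formula Φ of LAE, T proves Φ in the proof system of LAE if and only if T semantically entails Φ (i.e. every evaluation in every finite similarity space that satisfies all members of T also satisfies Φ). -/
/-- A finite t-norm: a finite subset `V` of the real unit interval containing `0` and `1`,
equipped with an associative, commutative, monotone operation with neutral element `1`. -/
structure FiniteTNorm where
  V : Set ℝ
  finite : V.Finite
  subset : V ⊆ Set.Icc (0 : ℝ) 1
  zero_mem : (0 : ℝ) ∈ V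
  one_mem : (1 : ℝ) ∈ V
  op : V → V → V
  op_assoc : ∀ a b c, op (op a b) c = op a (op b c)
  op_comm : ∀ a b, op a b = op b a
  op_one : ∀ a, op a ⟨1, one_mem⟩ = a
  op_mono : ∀ a b c d : V, (a : ℝ) ≤ (b : ℝ) → (c : ℝ) ≤ (d : ℝ) → (op a c : ℝ) ≤ (op b d : ℝ)

def FiniteTNorm.one (T : FiniteTNorm) : T.V := ⟨1, T.one_mem⟩

def FiniteTNorm.zero (T : FiniteTNorm) : T.V := ⟨0, T.zero_mem⟩

/-- A finite similarity space based on the finite t-norm `T`. -/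
structure SimilaritySpace (T : FiniteTNorm) (W : Type) [Fintype W] [Nonempty W] where
  S : W → W → T.V
  eq_one_iff : ∀ u v, S u v = T.one ↔ u = v
  symm : ∀ u v, S u v = S v u
  triangle : ∀ u v w, (T.op (S u v) (S v w) : ℝ) ≤ (S u w : ℝ)

/-- The `c`-neighbourhood `U_c(A)` of a set `A` of worlds. -/
def SimilaritySpace.nbhd {T : FiniteTNorm} {W : Type} [Fintype W] [Nonempty W]
    (sp : SimilaritySpace T W) (c : T.V) (A : Set W) : Set W :=
  {w | ∃ a ∈ A, (c : ℝ) ≤ (sp.S w a : ℝ)}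

/-- A totally ordered similarity space: a finite similarity space together with a total
order compatible with the similarity. -/
structure TOSimilaritySpace (T : FiniteTNorm) (W : Type) [Fintype W] [Nonempty W]
    [LinearOrder W] extends SimilaritySpace T W where
  compat : ∀ u v w : W, u ≤ v → v ≤ w → (S u w : ℝ) ≤ min (S u v : ℝ) (S v w : ℝ)

/-- The downward closure `◇≤ A`. -/
def dcl {W : Type} [LinearOrder W] (A : Set W) : Set W := {v | ∃ w ∈ A, v ≤ w}

/-- The upward closure `◇≥ A`. -/
def ucl {W : Type} [LinearOrder W] (A : Set W) : Set W := {v | ∃ w ∈ A, w ≤ v}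

/-! ## Syntax of the Logic of Approximate Entailment `LAE` -/

/-- Basic expressions of `LAE` over `N` propositional variables. -/
inductive BExp (N : ℕ) : Type
  | var (i : Fin N)
  | bot
  | top
  | and (φ ψ : BExp N)
  | or (φ ψ : BExp N)
  | not (φ : BExp N)

/-- Classical Boolean evaluation of a basic expression. -/
def BExp.beval {N : ℕ} (v : Fin N → Bool) : BExp N → Bool
  | .var i => v i
  | .bot => false
  | .top => true
  | .and φ ψ => φ.beval v && ψ.beval v
  | .or φ ψ => φ.beval v || ψ.beval v
  | .not φ => !φ.beval v

/-- `φ → ψ` is a tautology of classical propositional logic. -/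
def Tautology {N : ℕ} (φ ψ : BExp N) : Prop :=
  ∀ v : Fin N → Bool, φ.beval v = true → ψ.beval v = true

/-- The literal on variable `i`, positive or negated according to `b`. -/
def BExp.literal {N : ℕ} (i : Fin N) (b : Bool) : BExp N :=
  if b then BExp.var i else BExp.not (BExp.var i)

/-- The conjunction of a list of basic expressions. -/
def conjList {N : ℕ} : List (BExp N) → BExp N
  | [] => BExp.top
  | [φ] => φ
  | φ :: χ :: rest => BExp.and φ (conjList (χ :: rest))

/-- A maximally elementary conjunction (m.e.c.): a conjunction of literals in which each
variable occurs exactly once. -/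
def IsMec {N : ℕ} (φ : BExp N) : Prop :=
  ∃ (l : List (Fin N)) (f : Fin N → Bool),
    l.Nodup ∧ (∀ i, i ∈ l) ∧ φ = conjList (l.map fun i => BExp.literal i (f i))

/-- Formulas: Boolean combinations of graded implications `φ ⤳_c ψ`. -/
inductive LFml (N : ℕ) (V : Type) : Type
  | gi (φ : BExp N) (c : V) (ψ : BExp N)
  | and (Φ Ψ : LFml N V)
  | or (Φ Ψ : LFml N V)
  | not (Φ : LFml N V)

/-- The (definable) outer-level implication `Φ → Ψ := ¬Φ ∨ Ψ`. -/
def LFml.imp {N : ℕ} {V : Type} (Φ Ψ : LFml N V) : LFml N V := LFml.or (LFml.not Φ) Ψ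

/-- Boolean evaluation of a formula given truth values for the graded implications
occurring in it; a formula is a substitution instance of a classical tautology by graded
implications iff it evaluates to `true` under every such assignment. -/
def LFml.peval {N : ℕ} {V : Type} (g : BExp N → V → BExp N → Bool) : LFml N V → Bool
  | .gi φ c ψ => g φ c ψ
  | .and Φ Ψ => Φ.peval g && Ψ.peval g
  | .or Φ Ψ => Φ.peval g || Ψ.peval g
  | .not Φ => !Φ.peval g

/-! ## The proof system of `LAE` -/

/-- Provability in `LAE` from a theory `Th`: axioms (A1)–(A11) and modus ponens. -/
inductive LAEProv {N : ℕ} (T : FiniteTNorm) (Th : Set (LFml N T.V)) : LFml N T.V → Prop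
  | hyp {Φ} (h : Φ ∈ Th) : LAEProv T Th Φ
  | mp {Φ Ψ} (h₁ : LAEProv T Th Φ) (h₂ : LAEProv T Th (Φ.imp Ψ)) : LAEProv T Th Ψ
  | a1 {φ ψ : BExp N} (h : Tautology φ ψ) : LAEProv T Th (.gi φ T.one ψ)
  | a2 (φ ψ : BExp N) :
      LAEProv T Th ((LFml.gi φ T.one ψ).imp (.gi (φ.and ψ.not) T.one .bot))
  | a3 (φ ψ : BExp N) {c d : T.V} (h : (d : ℝ) ≤ (c : ℝ)) :
      LAEProv T Th ((LFml.gi φ c ψ).imp (.gi φ d ψ))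
  | a4 (φ ψ : BExp N) :
      LAEProv T Th ((LFml.not (.gi ψ T.one .bot)).imp (.gi φ T.zero ψ))
  | a5 (φ : BExp N) (c : T.V) :
      LAEProv T Th ((LFml.gi φ c .bot).imp (.gi φ T.one .bot))
  | a6 {δ ε : BExp N} (c : T.V) (hδ : IsMec δ) (hε : IsMec ε) :
      LAEProv T Th
        ((LFml.and (.not (.gi δ T.one .bot)) (.gi δ c ε)).imp (.gi ε c δ))
  | a7 (φ ψ χ : BExp N) (c : T.V) :
      LAEProv T Th ((LFml.and (.gi φ c χ) (.gi ψ c χ)).imp (.gi (φ.or ψ) c χ))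
  | a8 {ε : BExp N} (φ ψ : BExp N) (c : T.V) (hε : IsMec ε) :
      LAEProv T Th ((LFml.gi ε c (φ.or ψ)).imp (.or (.gi ε c φ) (.gi ε c ψ)))
  | a9 (φ ψ χ : BExp N) (c d : T.V) :
      LAEProv T Th ((LFml.and (.gi φ c ψ) (.gi ψ d χ)).imp (.gi φ (T.op c d) χ))
  | a10 : LAEProv T Th (LFml.not (.gi .top T.one .bot))
  | a11 {Φ : LFml N T.V} (h : ∀ g : BExp N → T.V → BExp N → Bool, Φ.peval g = true) :
      LAEProv T Th Φ

/-! ## Semantics of `LAE` -/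

/-- An evaluation of the basic expressions in a finite similarity space: it commutes with
the Boolean operations and separates any two distinct worlds by some variable. -/
structure LAEEval (N : ℕ) (W : Type) [Fintype W] [Nonempty W] where
  e : BExp N → Set W
  map_bot : e .bot = ∅
  map_top : e .top = Set.univ
  map_and : ∀ φ ψ, e (φ.and ψ) = e φ ∩ e ψ
  map_or : ∀ φ ψ, e (φ.or ψ) = e φ ∪ e ψ
  map_not : ∀ φ, e φ.not = (e φ)ᶜ
  separating : ∀ v w : W, v ≠ w → ∃ i : Fin N, Xor' (v ∈ e (.var i)) (w ∈ e (.var i))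

/-- Satisfaction of a formula by an evaluation in a finite similarity space. -/
def LAESat {T : FiniteTNorm} {N : ℕ} {W : Type} [Fintype W] [Nonempty W]
    (sp : SimilaritySpace T W) (ev : LAEEval N W) : LFml N T.V → Prop
  | .gi φ c ψ => ev.e φ ⊆ sp.nbhd c (ev.e ψ)
  | .and Φ Ψ => LAESat sp ev Φ ∧ LAESat sp ev Ψ
  | .or Φ Ψ => LAESat sp ev Φ ∨ LAESat sp ev Ψ
  | .not Φ => ¬ LAESat sp ev Φ

/-- Semantic entailment in `LAE`: every evaluation in every finite similarity space that
satisfies all members of the theory also satisfies the formula. -/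
def LAEEntails {N : ℕ} (T : FiniteTNorm) (Th : Set (LFml N T.V)) (Φ : LFml N T.V) : Prop :=
  ∀ (W : Type) [Fintype W] [Nonempty W],
    ∀ (sp : SimilaritySpace T W) (ev : LAEEval N W),
      (∀ Ψ ∈ Th, LAESat sp ev Ψ) → LAESat sp ev Φ

/-! ### Auxiliary: basic semantic facts -/

section Semantics

variable {T : FiniteTNorm} {N : ℕ} {W : Type} [Fintype W] [Nonempty W]

lemma tv_nonneg (c : T.V) : (0:ℝ) ≤ (c:ℝ) := (T.subset c.2).1
lemma tv_le_one (c : T.V) : (c:ℝ) ≤ 1 := (T.subset c.2).2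

lemma SimilaritySpace.S_self (sp : SimilaritySpace T W) (w : W) : sp.S w w = T.one :=
  (sp.eq_one_iff w w).2 rfl

lemma SimilaritySpace.nbhd_one (sp : SimilaritySpace T W) (A : Set W) :
    sp.nbhd T.one A = A := by
  ext w
  constructor
  · rintro ⟨a, ha, hS⟩
    have h1 : (sp.S w a : ℝ) = 1 := le_antisymm (tv_le_one _) hS
    have : sp.S w a = T.one := Subtype.ext h1
    rwa [(sp.eq_one_iff w a).1 this]
  · intro hw
    exact ⟨w, hw, by rw [sp.S_self]⟩

lemma SimilaritySpace.nbhd_mono_grade (sp : SimilaritySpace T W) {c d : T.V}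
    (h : (d:ℝ) ≤ (c:ℝ)) (A : Set W) : sp.nbhd c A ⊆ sp.nbhd d A := by
  rintro w ⟨a, ha, hS⟩; exact ⟨a, ha, le_trans h hS⟩

lemma SimilaritySpace.nbhd_mono (sp : SimilaritySpace T W) (c : T.V) {A B : Set W}
    (h : A ⊆ B) : sp.nbhd c A ⊆ sp.nbhd c B := by
  rintro w ⟨a, ha, hS⟩; exact ⟨a, h ha, hS⟩

lemma SimilaritySpace.nbhd_empty (sp : SimilaritySpace T W) (c : T.V) :
    sp.nbhd c (∅ : Set W) = ∅ := by
  ext w; simp [SimilaritySpace.nbhd]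

lemma SimilaritySpace.nbhd_union (sp : SimilaritySpace T W) (c : T.V) (A B : Set W) :
    sp.nbhd c (A ∪ B) = sp.nbhd c A ∪ sp.nbhd c B := by
  ext w
  constructor
  · rintro ⟨a, (ha | ha), hS⟩
    · exact Or.inl ⟨a, ha, hS⟩
    · exact Or.inr ⟨a, ha, hS⟩
  · rintro (⟨a, ha, hS⟩ | ⟨a, ha, hS⟩)
    · exact ⟨a, Or.inl ha, hS⟩
    · exact ⟨a, Or.inr ha, hS⟩

open Classical in
lemma LAEEval.mem_iff_beval (ev : LAEEval N W) (φ : BExp N) (w : W) :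
    w ∈ ev.e φ ↔ φ.beval (fun i => decide (w ∈ ev.e (.var i))) = true := by
  induction φ with
  | var i => simp [BExp.beval]
  | bot => simp [BExp.beval, ev.map_bot]
  | top => simp [BExp.beval, ev.map_top]
  | and φ ψ ihφ ihψ => simp [BExp.beval, ev.map_and, ihφ, ihψ]
  | or φ ψ ihφ ihψ => simp [BExp.beval, ev.map_or, ihφ, ihψ]
  | not φ ihφ => simp [BExp.beval, ev.map_not, ihφ]

open Classical in
lemma LAEEval.subset_of_taut (ev : LAEEval N W) {φ ψ : BExp N} (h : Tautology φ ψ) :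
    ev.e φ ⊆ ev.e ψ := by
  intro w hw
  rw [ev.mem_iff_beval] at hw ⊢
  exact h _ hw

end Semantics
/-! ### Boolean evaluation of conjunctions and m.e.c.s -/

lemma beval_conjList {N : ℕ} (v : Fin N → Bool) :
    ∀ l : List (BExp N), (conjList l).beval v = true ↔ ∀ φ ∈ l, φ.beval v = true
  | [] => by simp [conjList, BExp.beval]
  | [φ] => by simp [conjList]
  | φ :: χ :: rest => by
      have ih := beval_conjList v (χ :: rest)
      simp only [conjList, BExp.beval, Bool.and_eq_true, ih, List.mem_cons]
      aesop

lemma beval_literal {N : ℕ} (v : Fin N → Bool) (i : Fin N) (b : Bool) :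
    (BExp.literal i b).beval v = true ↔ v i = b := by
  cases b <;> simp [BExp.literal, BExp.beval]

lemma beval_mec {N : ℕ} {δ : BExp N} (v : Fin N → Bool)
    (l : List (Fin N)) (f : Fin N → Bool)
    (hl : ∀ i : Fin N, i ∈ l)
    (heq : δ = conjList (l.map fun i => BExp.literal i (f i))) :
    δ.beval v = true ↔ ∀ i, v i = f i := by
  rw [heq, beval_conjList]
  constructor
  · intro h i
    exact (beval_literal v i (f i)).1 (h _ (List.mem_map.2 ⟨i, hl i, rfl⟩))
  · rintro h φ hφ
    rcases List.mem_map.1 hφ with ⟨i, -, rfl⟩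
    exact (beval_literal v i (f i)).2 (h i)

lemma IsMec.beval_iff {N : ℕ} {δ : BExp N} (hδ : IsMec δ) (v : Fin N → Bool) :
    ∃ f : Fin N → Bool, ∀ w : Fin N → Bool, (δ.beval w = true ↔ ∀ i, w i = f i) := by
  obtain ⟨l, f, hnd, hall, heq⟩ := hδ
  exact ⟨f, fun w => beval_mec w l f hall heq⟩

open Classical in
/-- The evaluation of a m.e.c. contains at most one world. -/
lemma IsMec.subsingleton {N : ℕ} {W : Type} [Fintype W] [Nonempty W]
    (ev : LAEEval N W) {δ : BExp N} (hδ : IsMec δ) :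
    ∀ v ∈ ev.e δ, ∀ w ∈ ev.e δ, v = w := by
  intro v hv w hw
  obtain ⟨f, hf⟩ := hδ.beval_iff (fun _ => true)
  rw [ev.mem_iff_beval, hf] at hv hw
  by_contra hne
  obtain ⟨i, hx⟩ := ev.separating v w hne
  have h1 := hv i
  have h2 := hw i
  rcases hx with ⟨ha, hb⟩ | ⟨ha, hb⟩
  · simp [ha] at h1; simp [h1] at h2; exact hb (by simpa using h2)
  · simp [ha] at h2; simp [h2] at h1; exact hb (by simpa using h1)

/-! ### Soundness -/

open Classical in
lemma LAESat_iff_peval {T : FiniteTNorm} {N : ℕ} {W : Type} [Fintype W] [Nonempty W]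
    (sp : SimilaritySpace T W) (ev : LAEEval N W) (Φ : LFml N T.V) :
    LAESat sp ev Φ ↔
      Φ.peval (fun φ c ψ => decide (ev.e φ ⊆ sp.nbhd c (ev.e ψ))) = true := by
  induction Φ with
  | gi φ c ψ => simp [LAESat, LFml.peval]
  | and Φ Ψ ihΦ ihΨ => simp [LAESat, LFml.peval, ihΦ, ihΨ]
  | or Φ Ψ ihΦ ihΨ => simp [LAESat, LFml.peval, ihΦ, ihΨ]
  | not Φ ihΦ => simp [LAESat, LFml.peval, ihΦ]

theorem LAE_soundness {N : ℕ} {T : FiniteTNorm} {Th : Set (LFml N T.V)}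
    {Φ : LFml N T.V} (h : LAEProv T Th Φ) : LAEEntails T Th Φ := by
  induction h with
  | hyp h => exact fun W _ _ sp ev hT => hT _ h
  | mp h1 h2 ih1 ih2 =>
      intro W _ _ sp ev hT
      have s1 := ih1 W sp ev hT
      have s2 := ih2 W sp ev hT
      rcases s2 with s2 | s2
      · exact absurd s1 s2
      · exact s2
  | a1 h =>
      intro W _ _ sp ev _
      show ev.e _ ⊆ sp.nbhd _ (ev.e _)
      rw [sp.nbhd_one]
      exact ev.subset_of_taut h
  | a2 φ ψ =>
      intro W _ _ sp ev _
      rcases Classical.em (LAESat sp ev (.gi φ T.one ψ)) with h | h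
      · right
        have h0 : ev.e φ ⊆ sp.nbhd T.one (ev.e ψ) := h
        have h' : ev.e φ ⊆ ev.e ψ := by rwa [sp.nbhd_one] at h0
        show ev.e _ ⊆ sp.nbhd _ (ev.e _)
        rw [ev.map_and, ev.map_not, ev.map_bot, sp.nbhd_one]
        intro w hw
        exact absurd (h' hw.1) hw.2
      · exact Or.inl h
  | a3 φ ψ h =>
      intro W _ _ sp ev _
      rcases Classical.em (LAESat sp ev (.gi φ _ ψ)) with h' | h'
      · exact Or.inr (fun w hw => sp.nbhd_mono_grade h _ (h' hw))
      · exact Or.inl h'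
  | a4 φ ψ =>
      intro W _ _ sp ev _
      rcases Classical.em (LAESat sp ev (.not (.gi ψ T.one .bot))) with h | h
      · right
        have hne : (ev.e ψ).Nonempty := by
          by_contra hc
          rw [Set.not_nonempty_iff_eq_empty] at hc
          exact h (by show ev.e ψ ⊆ _; rw [hc, ev.map_bot]; exact fun x hx => absurd hx (by simp))
        obtain ⟨a, ha⟩ := hne
        intro w _
        exact ⟨a, ha, tv_nonneg _⟩
      · exact Or.inl (fun hc => h hc)
  | a5 φ c =>
      intro W _ _ sp ev _
      rcases Classical.em (LAESat sp ev (.gi φ c .bot)) with h | h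
      · right
        have : ev.e φ ⊆ sp.nbhd c (ev.e .bot) := h
        rw [ev.map_bot, sp.nbhd_empty] at this
        show ev.e φ ⊆ sp.nbhd T.one (ev.e .bot)
        rw [ev.map_bot, sp.nbhd_empty]
        exact this
      · exact Or.inl h
  | a6 c hδ hε =>
      rename_i δ ε
      intro W _ _ sp ev _
      rcases Classical.em (LAESat sp ev (.and (.not (.gi δ T.one .bot)) (.gi δ c ε))) with h | h
      · right
        obtain ⟨h1, h2⟩ := h
        have hne : (ev.e δ).Nonempty := by
          by_contra hc
          rw [Set.not_nonempty_iff_eq_empty] at hc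
          exact h1 (by show ev.e δ ⊆ _; rw [hc]; exact fun x hx => absurd hx (by simp))
        obtain ⟨u, hu⟩ := hne
        obtain ⟨a, ha, hS⟩ := h2 hu
        show ev.e ε ⊆ sp.nbhd c (ev.e δ)
        intro w hw
        have : w = a := hε.subsingleton ev w hw a ha
        subst this
        exact ⟨u, hu, by rwa [sp.symm]⟩
      · exact Or.inl h
  | a7 φ ψ χ c =>
      intro W _ _ sp ev _
      rcases Classical.em (LAESat sp ev (.and (.gi φ c χ) (.gi ψ c χ))) with h | h
      · right
        obtain ⟨h1, h2⟩ := h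
        show ev.e _ ⊆ _
        rw [ev.map_or]
        rintro w (hw | hw)
        · exact h1 hw
        · exact h2 hw
      · exact Or.inl h
  | a8 φ ψ c hε =>
      rename_i ε
      intro W _ _ sp ev _
      rcases Classical.em (LAESat sp ev (.gi ε c (φ.or ψ))) with h | h
      · right
        rcases Set.eq_empty_or_nonempty (ev.e ε) with he | ⟨u, hu⟩
        · left; show ev.e ε ⊆ _; rw [he]; exact Set.empty_subset _
        · have h' := h hu
          rw [ev.map_or, sp.nbhd_union] at h'
          have hsub : ev.e ε ⊆ {u} := fun w hw => hε.subsingleton ev w hw u hu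
          rcases h' with h' | h'
          · left; intro w hw; rw [Set.mem_singleton_iff.1 (hsub hw)]; exact h'
          · right; intro w hw; rw [Set.mem_singleton_iff.1 (hsub hw)]; exact h'
      · exact Or.inl h
  | a9 φ ψ χ c d =>
      intro W _ _ sp ev _
      rcases Classical.em (LAESat sp ev (.and (.gi φ c ψ) (.gi ψ d χ))) with h | h
      · right
        obtain ⟨h1, h2⟩ := h
        intro w hw
        obtain ⟨a, ha, hSa⟩ := h1 hw
        obtain ⟨b, hb, hSb⟩ := h2 ha
        refine ⟨b, hb, le_trans (le_trans (T.op_mono _ _ _ _ hSa hSb) (sp.triangle w a b)) ?_⟩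
        exact le_refl _
      · exact Or.inl h
  | a10 =>
      intro W _ _ sp ev _
      intro hc
      obtain ⟨w⟩ := ‹Nonempty W›
      have : w ∈ sp.nbhd T.one (ev.e .bot) := hc (by rw [ev.map_top]; trivial)
      rw [ev.map_bot, sp.nbhd_empty] at this
      exact this
  | a11 h =>
      intro W _ _ sp ev _
      rw [LAESat_iff_peval]
      exact h _
/-! ### Proof-theoretic infrastructure -/

namespace LAEaux

variable {N : ℕ} {T : FiniteTNorm}

/-- A canonical contradictory formula. -/
def Bot (N : ℕ) (T : FiniteTNorm) : LFml N T.V := LFml.gi .top T.one .bot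

def Consistent (T : FiniteTNorm) (Th : Set (LFml N T.V)) : Prop :=
  ¬ LAEProv T Th (Bot N T)

lemma prov_mono {Th Th' : Set (LFml N T.V)} (hsub : Th ⊆ Th') {Φ : LFml N T.V}
    (h : LAEProv T Th Φ) : LAEProv T Th' Φ := by
  induction h with
  | hyp h => exact .hyp (hsub h)
  | mp _ _ ih1 ih2 => exact .mp ih1 ih2
  | a1 h => exact .a1 h
  | a2 φ ψ => exact .a2 φ ψ
  | a3 φ ψ h => exact .a3 φ ψ h
  | a4 φ ψ => exact .a4 φ ψ
  | a5 φ c => exact .a5 φ c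
  | a6 c hδ hε => exact .a6 c hδ hε
  | a7 φ ψ χ c => exact .a7 φ ψ χ c
  | a8 φ ψ c hε => exact .a8 φ ψ c hε
  | a9 φ ψ χ c d => exact .a9 φ ψ χ c d
  | a10 => exact .a10
  | a11 h => exact .a11 h

lemma prov_compact {Th : Set (LFml N T.V)} {Φ : LFml N T.V}
    (h : LAEProv T Th Φ) : ∃ s : Set (LFml N T.V), s ⊆ Th ∧ s.Finite ∧ LAEProv T s Φ := by
  induction h with
  | hyp h => exact ⟨{_}, by simpa using h, Set.finite_singleton _, .hyp rfl⟩
  | mp _ _ ih1 ih2 =>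
      obtain ⟨s1, hs1, hf1, hp1⟩ := ih1
      obtain ⟨s2, hs2, hf2, hp2⟩ := ih2
      exact ⟨s1 ∪ s2, Set.union_subset hs1 hs2, hf1.union hf2,
        .mp (prov_mono Set.subset_union_left hp1) (prov_mono Set.subset_union_right hp2)⟩
  | a1 h => exact ⟨∅, Set.empty_subset _, Set.finite_empty, .a1 h⟩
  | a2 φ ψ => exact ⟨∅, Set.empty_subset _, Set.finite_empty, .a2 φ ψ⟩
  | a3 φ ψ h => exact ⟨∅, Set.empty_subset _, Set.finite_empty, .a3 φ ψ h⟩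
  | a4 φ ψ => exact ⟨∅, Set.empty_subset _, Set.finite_empty, .a4 φ ψ⟩
  | a5 φ c => exact ⟨∅, Set.empty_subset _, Set.finite_empty, .a5 φ c⟩
  | a6 c hδ hε => exact ⟨∅, Set.empty_subset _, Set.finite_empty, .a6 c hδ hε⟩
  | a7 φ ψ χ c => exact ⟨∅, Set.empty_subset _, Set.finite_empty, .a7 φ ψ χ c⟩
  | a8 φ ψ c hε => exact ⟨∅, Set.empty_subset _, Set.finite_empty, .a8 φ ψ c hε⟩
  | a9 φ ψ χ c d => exact ⟨∅, Set.empty_subset _, Set.finite_empty, .a9 φ ψ χ c d⟩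
  | a10 => exact ⟨∅, Set.empty_subset _, Set.finite_empty, .a10⟩
  | a11 h => exact ⟨∅, Set.empty_subset _, Set.finite_empty, .a11 h⟩

variable {Th : Set (LFml N T.V)}

-- Direct tautology lemmas via a11.
lemma taut_K (Φ Ψ : LFml N T.V) : LAEProv T Th (Φ.imp (Ψ.imp Φ)) := by
  apply LAEProv.a11
  intro g
  simp only [LFml.imp, LFml.peval]
  cases Φ.peval g <;> cases Ψ.peval g <;> rfl

lemma taut_S (Φ Ψ X : LFml N T.V) :
    LAEProv T Th ((Φ.imp (Ψ.imp X)).imp ((Φ.imp Ψ).imp (Φ.imp X))) := by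
  apply LAEProv.a11
  intro g
  simp only [LFml.imp, LFml.peval]
  cases Φ.peval g <;> cases Ψ.peval g <;> cases X.peval g <;> rfl

lemma taut_I (Φ : LFml N T.V) : LAEProv T Th (Φ.imp Φ) := by
  apply LAEProv.a11
  intro g
  simp only [LFml.imp, LFml.peval]
  cases Φ.peval g <;> rfl

lemma taut_andI (Φ Ψ : LFml N T.V) : LAEProv T Th (Φ.imp (Ψ.imp (Φ.and Ψ))) := by
  apply LAEProv.a11
  intro g
  simp only [LFml.imp, LFml.peval]
  cases Φ.peval g <;> cases Ψ.peval g <;> rfl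

lemma taut_andE1 (Φ Ψ : LFml N T.V) : LAEProv T Th ((Φ.and Ψ).imp Φ) := by
  apply LAEProv.a11
  intro g
  simp only [LFml.imp, LFml.peval]
  cases Φ.peval g <;> cases Ψ.peval g <;> rfl

lemma taut_andE2 (Φ Ψ : LFml N T.V) : LAEProv T Th ((Φ.and Ψ).imp Ψ) := by
  apply LAEProv.a11
  intro g
  simp only [LFml.imp, LFml.peval]
  cases Φ.peval g <;> cases Ψ.peval g <;> rfl

lemma taut_orI1 (Φ Ψ : LFml N T.V) : LAEProv T Th (Φ.imp (Φ.or Ψ)) := by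
  apply LAEProv.a11
  intro g
  simp only [LFml.imp, LFml.peval]
  cases Φ.peval g <;> cases Ψ.peval g <;> rfl

lemma taut_orI2 (Φ Ψ : LFml N T.V) : LAEProv T Th (Ψ.imp (Φ.or Ψ)) := by
  apply LAEProv.a11
  intro g
  simp only [LFml.imp, LFml.peval]
  cases Φ.peval g <;> cases Ψ.peval g <;> rfl

lemma taut_orE (Φ Ψ X : LFml N T.V) :
    LAEProv T Th ((Φ.imp X).imp ((Ψ.imp X).imp ((Φ.or Ψ).imp X))) := by
  apply LAEProv.a11
  intro g
  simp only [LFml.imp, LFml.peval]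
  cases Φ.peval g <;> cases Ψ.peval g <;> cases X.peval g <;> rfl

lemma taut_notE (Φ Ψ : LFml N T.V) : LAEProv T Th (Φ.not.imp (Φ.imp Ψ)) := by
  apply LAEProv.a11
  intro g
  simp only [LFml.imp, LFml.peval]
  cases Φ.peval g <;> cases Ψ.peval g <;> rfl

lemma taut_em (Φ Ψ : LFml N T.V) :
    LAEProv T Th ((Φ.imp Ψ).imp ((Φ.not.imp Ψ).imp Ψ)) := by
  apply LAEProv.a11
  intro g
  simp only [LFml.imp, LFml.peval]
  cases Φ.peval g <;> cases Ψ.peval g <;> rfl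

lemma taut_dne (Φ : LFml N T.V) : LAEProv T Th (Φ.not.not.imp Φ) := by
  apply LAEProv.a11
  intro g
  simp only [LFml.imp, LFml.peval]
  cases Φ.peval g <;> rfl

lemma taut_contr (Φ Ψ : LFml N T.V) :
    LAEProv T Th (Φ.imp (Φ.not.imp Ψ)) := by
  apply LAEProv.a11
  intro g
  simp only [LFml.imp, LFml.peval]
  cases Φ.peval g <;> cases Ψ.peval g <;> rfl

/-- Deduction theorem. -/
lemma deduction {Φ Ψ : LFml N T.V} (h : LAEProv T (Th ∪ {Φ}) Ψ) :
    LAEProv T Th (Φ.imp Ψ) := by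
  induction h with
  | hyp h =>
      rcases h with h | h
      · exact .mp (.hyp h) (taut_K _ _)
      · rcases h with rfl
        exact taut_I _
  | mp _ _ ih1 ih2 =>
      exact .mp ih1 (.mp ih2 (taut_S _ _ _))
  | a1 h => exact .mp (.a1 h) (taut_K _ _)
  | a2 φ ψ => exact .mp (.a2 φ ψ) (taut_K _ _)
  | a3 φ ψ h => exact .mp (.a3 φ ψ h) (taut_K _ _)
  | a4 φ ψ => exact .mp (.a4 φ ψ) (taut_K _ _)
  | a5 φ c => exact .mp (.a5 φ c) (taut_K _ _)
  | a6 c hδ hε => exact .mp (.a6 c hδ hε) (taut_K _ _)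
  | a7 φ ψ χ c => exact .mp (.a7 φ ψ χ c) (taut_K _ _)
  | a8 φ ψ c hε => exact .mp (.a8 φ ψ c hε) (taut_K _ _)
  | a9 φ ψ χ c d => exact .mp (.a9 φ ψ χ c d) (taut_K _ _)
  | a10 => exact .mp .a10 (taut_K _ _)
  | a11 h => exact .mp (.a11 h) (taut_K _ _)

lemma inconsistent_proves {Th : Set (LFml N T.V)} (h : ¬ Consistent T Th)
    (Ψ : LFml N T.V) : LAEProv T Th Ψ := by
  rw [Consistent, not_not] at h
  exact .mp LAEProv.a10 (.mp h (taut_contr _ _))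

lemma taut_contrapos (Φ Ψ : LFml N T.V) :
    LAEProv T Th ((Φ.not.imp Ψ).imp (Ψ.not.imp Φ)) := by
  apply LAEProv.a11
  intro g
  simp only [LFml.imp, LFml.peval]
  cases Φ.peval g <;> cases Ψ.peval g <;> rfl

lemma consistent_of_not_prov {Th : Set (LFml N T.V)} {Φ : LFml N T.V}
    (h : ¬ LAEProv T Th Φ) : Consistent T (Th ∪ {Φ.not}) := by
  intro hc
  apply h
  have h1 : LAEProv T Th (Φ.not.imp (Bot N T)) := deduction hc
  have h2 : LAEProv T Th ((Bot N T).not.imp Φ) := .mp h1 (taut_contrapos _ _)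
  exact .mp LAEProv.a10 h2

end LAEaux
namespace LAEaux

variable {N : ℕ} {T : FiniteTNorm}

/-- A maximal consistent set. -/
structure MCS (T : FiniteTNorm) (N : ℕ) where
  Δ : Set (LFml N T.V)
  cons : Consistent T Δ
  max : ∀ Th', Δ ⊆ Th' → Consistent T Th' → Th' = Δ

lemma lindenbaum {Th : Set (LFml N T.V)} (h : Consistent T Th) :
    ∃ M : MCS T N, Th ⊆ M.Δ := by
  obtain ⟨Δ, hsub, hΔ⟩ := zorn_subset_nonempty {S : Set (LFml N T.V) | Consistent T S}
    (fun ch hch hchain hne => by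
      refine ⟨⋃₀ ch, ?_, fun s hs => Set.subset_sUnion_of_mem hs⟩
      intro hc
      obtain ⟨s, hs, hsf, hsp⟩ := prov_compact hc
      rw [Set.sUnion_eq_biUnion] at hs
      obtain ⟨m, hm, hsm⟩ := DirectedOn.exists_mem_subset_of_finset_subset_biUnion hne
        (hchain.directedOn) (s := hsf.toFinset) (by simpa using hs)
      exact (hch hm) (prov_mono (by simpa using hsm) hsp)) Th h
  refine ⟨⟨Δ, hΔ.prop, fun Th' hsub' hcons' => hΔ.eq_of_ge hcons' hsub'⟩, hsub⟩

variable {M : MCS T N}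

lemma MCS.cons' (M : MCS T N) : Consistent T M.Δ := M.cons

lemma mcs_cut {Φ Ψ : LFml N T.V} (hΦ : LAEProv T M.Δ Φ)
    (hΨ : LAEProv T (M.Δ ∪ {Φ}) Ψ) : LAEProv T M.Δ Ψ :=
  .mp hΦ (deduction hΨ)

lemma mcs_mem_of_prov {Φ : LFml N T.V} (h : LAEProv T M.Δ Φ) : Φ ∈ M.Δ := by
  have hcons : Consistent T (M.Δ ∪ {Φ}) := by
    intro hc
    exact M.cons (mcs_cut h hc)
  have := M.max _ Set.subset_union_left hcons
  rw [← this]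
  exact Or.inr rfl

lemma mcs_mem_iff_prov {Φ : LFml N T.V} : Φ ∈ M.Δ ↔ LAEProv T M.Δ Φ :=
  ⟨fun h => .hyp h, mcs_mem_of_prov⟩

lemma mcs_not_mem_iff {Φ : LFml N T.V} : Φ.not ∈ M.Δ ↔ Φ ∉ M.Δ := by
  constructor
  · intro h1 h2
    apply M.cons
    exact .mp (.hyp h2) (.mp (.hyp h1) (taut_notE Φ (Bot N T)))
  · intro h1
    by_contra h2
    apply h1
    apply mcs_mem_of_prov
    -- both Φ and Φ.not fail to be in Δ; show Δ ∪ {Φ.not} is consistent, contradicting?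
    -- Instead: ¬ provable Φ.not means Δ ∪ {Φ.not.not}? Use: if ¬(Φ.not ∈ Δ) then Δ∪{Φ.not} incons is false
    have hΦnotprov : ¬ LAEProv T M.Δ Φ.not := fun hp => h2 (mcs_mem_of_prov hp)
    have hcons := consistent_of_not_prov hΦnotprov
    have := M.max _ Set.subset_union_left hcons
    have hmem : Φ.not.not ∈ M.Δ := by rw [← this]; exact Or.inr rfl
    exact .mp (.hyp hmem) (taut_dne Φ)

lemma mcs_mp {Φ Ψ : LFml N T.V} (h1 : Φ ∈ M.Δ) (h2 : Φ.imp Ψ ∈ M.Δ) : Ψ ∈ M.Δ :=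
  mcs_mem_of_prov (.mp (.hyp h1) (.hyp h2))

lemma mcs_and_iff {Φ Ψ : LFml N T.V} : Φ.and Ψ ∈ M.Δ ↔ Φ ∈ M.Δ ∧ Ψ ∈ M.Δ := by
  constructor
  · intro h
    exact ⟨mcs_mp h (mcs_mem_of_prov (taut_andE1 Φ Ψ)),
           mcs_mp h (mcs_mem_of_prov (taut_andE2 Φ Ψ))⟩
  · rintro ⟨h1, h2⟩
    exact mcs_mem_of_prov (.mp (.hyp h2) (.mp (.hyp h1) (taut_andI Φ Ψ)))

lemma mcs_or_iff {Φ Ψ : LFml N T.V} : Φ.or Ψ ∈ M.Δ ↔ Φ ∈ M.Δ ∨ Ψ ∈ M.Δ := by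
  constructor
  · intro h
    by_contra hc
    push_neg at hc
    obtain ⟨h1, h2⟩ := hc
    rw [← mcs_not_mem_iff] at h1 h2
    apply M.cons
    have e1 : LAEProv T M.Δ (Φ.imp (Bot N T)) := .mp (.hyp h1) (taut_notE Φ (Bot N T))
    have e2 : LAEProv T M.Δ (Ψ.imp (Bot N T)) := .mp (.hyp h2) (taut_notE Ψ (Bot N T))
    exact .mp (.hyp h) (.mp e2 (.mp e1 (taut_orE Φ Ψ (Bot N T))))
  · rintro (h | h)
    · exact mcs_mp h (mcs_mem_of_prov (taut_orI1 Φ Ψ))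
    · exact mcs_mp h (mcs_mem_of_prov (taut_orI2 Φ Ψ))

end LAEaux
namespace LAEaux

variable {N : ℕ} {T : FiniteTNorm} {Th : Set (LFml N T.V)}

/-- The canonical m.e.c. attached to a Boolean assignment. -/
def cmec (f : Fin N → Bool) : BExp N :=
  conjList ((List.finRange N).map fun i => BExp.literal i (f i))

lemma cmec_isMec (f : Fin N → Bool) : IsMec (cmec f) :=
  ⟨List.finRange N, f, List.nodup_finRange N, List.mem_finRange, rfl⟩

lemma beval_cmec (f v : Fin N → Bool) : (cmec f).beval v = true ↔ v = f := by
  rw [show cmec f = conjList ((List.finRange N).map fun i => BExp.literal i (f i)) from rfl,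
    beval_mec v (List.finRange N) f List.mem_finRange rfl]
  exact ⟨fun h => funext h, fun h i => by rw [h]⟩

lemma taut_cmec_of_beval {f : Fin N → Bool} {φ : BExp N} (h : φ.beval f = true) :
    Tautology (cmec f) φ := by
  intro v hv
  rw [beval_cmec] at hv
  rwa [hv]

/-- Disjunction of a list of expressions. -/
def disjList (l : List (BExp N)) : BExp N := l.foldr .or .bot

lemma beval_disjList (v : Fin N → Bool) :
    ∀ l : List (BExp N), (disjList l).beval v = true ↔ ∃ φ ∈ l, φ.beval v = true
  | [] => by simp [disjList, BExp.beval]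
  | φ :: rest => by
      have ih := beval_disjList v rest
      simp only [disjList, List.foldr] at ih ⊢
      simp only [BExp.beval, Bool.or_eq_true, ih, List.mem_cons]
      aesop

/-- Grade arithmetic. -/
lemma op_one_left (c : T.V) : T.op T.one c = c := by rw [T.op_comm]; exact T.op_one c

lemma prov_and {Φ Ψ : LFml N T.V} (h1 : LAEProv T Th Φ) (h2 : LAEProv T Th Ψ) :
    LAEProv T Th (Φ.and Ψ) := .mp h2 (.mp h1 (taut_andI Φ Ψ))

/-- Composition with a `1`-graded implication on the left. -/
lemma gi_trans_left {φ ψ χ : BExp N} {c : T.V} (h1 : LAEProv T Th (.gi φ T.one ψ))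
    (h2 : LAEProv T Th (.gi ψ c χ)) : LAEProv T Th (.gi φ c χ) := by
  have h3 := LAEProv.mp (prov_and h1 h2) (LAEProv.a9 φ ψ χ T.one c (T := T) (Th := Th))
  rwa [op_one_left] at h3

/-- Composition with a `1`-graded implication on the right. -/
lemma gi_trans_right {φ ψ χ : BExp N} {c : T.V} (h1 : LAEProv T Th (.gi φ c ψ))
    (h2 : LAEProv T Th (.gi ψ T.one χ)) : LAEProv T Th (.gi φ c χ) := by
  have h3 := LAEProv.mp (prov_and h1 h2) (LAEProv.a9 φ ψ χ c T.one (T := T) (Th := Th))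
  rwa [show T.op c T.one = c from T.op_one c] at h3

lemma prov_gi_bot {ψ : BExp N} (c : T.V) : LAEProv T Th (.gi .bot c ψ) := by
  have h1 : LAEProv T Th (.gi .bot T.one ψ) := .a1 (fun v hv => by simp [BExp.beval] at hv)
  exact .mp h1 (.a3 _ _ (tv_le_one c))

lemma prov_disj_intro {ψ : BExp N} {c : T.V} :
    ∀ {l : List (BExp N)}, (∀ φ ∈ l, LAEProv T Th (.gi φ c ψ)) →
      LAEProv T Th (.gi (disjList l) c ψ)
  | [], _ => prov_gi_bot c
  | φ :: rest, h => by
      have ih := prov_disj_intro (l := rest) (fun χ hχ => h χ (by simp [hχ]))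
      have hφ := h φ (by simp)
      exact .mp (prov_and hφ ih) (.a7 φ (disjList rest) ψ c)

end LAEaux
namespace LAEaux

variable {N : ℕ} {T : FiniteTNorm}

/-- A Boolean assignment is consistent for the m.c.s. `M`. -/
def ConsW (M : MCS T N) (f : Fin N → Bool) : Prop :=
  (LFml.not (.gi (cmec f) T.one .bot)) ∈ M.Δ

lemma consW_or_bot (M : MCS T N) (f : Fin N → Bool) :
    ConsW M f ∨ (LFml.gi (cmec f) T.one .bot) ∈ M.Δ := by
  rcases Classical.em (ConsW M f) with h | h
  · exact Or.inl h
  · right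
    by_contra hc
    exact h (mcs_not_mem_iff.2 hc)

/-- The worlds of the canonical model. -/
def CWorld (M : MCS T N) : Type := {f : Fin N → Bool // ConsW M f}

noncomputable instance (M : MCS T N) : Fintype (CWorld M) := by
  classical
  have : Finite {f : Fin N → Bool // ConsW M f} := Subtype.finite
  exact @Fintype.ofFinite (CWorld M) this

/-- In the canonical model, the best grade of implication between two m.e.c.s exists. -/
lemma exists_best (M : MCS T N) (f g : CWorld M) :
    ∃ c : T.V, (LFml.gi (cmec f.1) c (cmec g.1)) ∈ M.Δ ∧
      ∀ d : T.V, (LFml.gi (cmec f.1) d (cmec g.1)) ∈ M.Δ → (d:ℝ) ≤ (c:ℝ) := by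
  classical
  set s : Set T.V := {c : T.V | (LFml.gi (cmec f.1) c (cmec g.1)) ∈ M.Δ} with hs
  have hne : s.Nonempty := by
    refine ⟨T.zero, ?_⟩
    have h4 := LAEProv.a4 (T := T) (Th := M.Δ) (cmec f.1) (cmec g.1)
    exact mcs_mem_of_prov (.mp (.hyp g.2) h4)
  have hfin : s.Finite := by
    haveI : Finite T.V := T.finite.to_subtype
    exact s.toFinite
  obtain ⟨c, hc, hmax⟩ := Set.exists_max_image s (fun c => (c:ℝ)) hfin hne
  exact ⟨c, hc, fun d hd => hmax d hd⟩

/-- The canonical similarity degree. -/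
noncomputable def CS (M : MCS T N) (f g : CWorld M) : T.V :=
  (exists_best M f g).choose

lemma CS_mem (M : MCS T N) (f g : CWorld M) :
    (LFml.gi (cmec f.1) (CS M f g) (cmec g.1)) ∈ M.Δ :=
  (exists_best M f g).choose_spec.1

lemma CS_ge (M : MCS T N) (f g : CWorld M) {d : T.V}
    (h : (LFml.gi (cmec f.1) d (cmec g.1)) ∈ M.Δ) : (d:ℝ) ≤ (CS M f g : ℝ) :=
  (exists_best M f g).choose_spec.2 d h

lemma CS_self (M : MCS T N) (f : CWorld M) : CS M f f = T.one := by
  have h1 : (LFml.gi (cmec f.1) T.one (cmec f.1)) ∈ M.Δ :=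
    mcs_mem_of_prov (.a1 (fun v hv => hv))
  exact Subtype.ext (le_antisymm (tv_le_one _) (CS_ge M f f h1))

lemma CS_eq_one_iff (M : MCS T N) (f g : CWorld M) : CS M f g = T.one ↔ f = g := by
  constructor
  · intro h
    have h1 : (LFml.gi (cmec f.1) T.one (cmec g.1)) ∈ M.Δ := h ▸ CS_mem M f g
    by_contra hne
    have hvne : f.1 ≠ g.1 := fun hc => hne (Subtype.ext hc)
    -- mec f → (mec f ∧ ¬ mec g) is a tautology
    have htaut : Tautology (cmec f.1) ((cmec f.1).and (cmec g.1).not) := by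
      intro v hv
      have hv' := (beval_cmec f.1 v).1 hv
      have hg : (cmec g.1).beval v = false := by
        rw [hv']
        by_contra hb
        rw [Bool.not_eq_false, beval_cmec] at hb
        exact hvne hb
      simp [BExp.beval, hv, hg]
    have h2 : LAEProv T M.Δ (.gi ((cmec f.1).and (cmec g.1).not) T.one .bot) :=
      .mp (.hyp h1) (.a2 (cmec f.1) (cmec g.1))
    have h3 : LAEProv T M.Δ (.gi (cmec f.1) T.one .bot) :=
      gi_trans_left (.a1 htaut) h2
    exact M.cons (.mp (.hyp f.2) (.mp h3 (taut_contr _ _)))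
  · rintro rfl
    exact CS_self M f
lemma CS_symm_le (M : MCS T N) (f g : CWorld M) : (CS M f g : ℝ) ≤ (CS M g f : ℝ) := by
  have h6 := LAEProv.a6 (T := T) (Th := M.Δ) (CS M f g) (cmec_isMec f.1) (cmec_isMec g.1)
  have h : (LFml.gi (cmec g.1) (CS M f g) (cmec f.1)) ∈ M.Δ :=
    mcs_mem_of_prov (.mp (prov_and (.hyp f.2) (.hyp (CS_mem M f g))) h6)
  exact CS_ge M g f h

lemma CS_symm (M : MCS T N) (f g : CWorld M) : CS M f g = CS M g f :=
  Subtype.ext (le_antisymm (CS_symm_le M f g) (CS_symm_le M g f))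

lemma CS_triangle (M : MCS T N) (f g h : CWorld M) :
    (T.op (CS M f g) (CS M g h) : ℝ) ≤ (CS M f h : ℝ) := by
  have h9 := LAEProv.a9 (T := T) (Th := M.Δ) (cmec f.1) (cmec g.1) (cmec h.1)
    (CS M f g) (CS M g h)
  have hmem : (LFml.gi (cmec f.1) (T.op (CS M f g) (CS M g h)) (cmec h.1)) ∈ M.Δ :=
    mcs_mem_of_prov (.mp (prov_and (.hyp (CS_mem M f g)) (.hyp (CS_mem M g h))) h9)
  exact CS_ge M f h hmem

end LAEaux
namespace LAEaux

variable {N : ℕ} {T : FiniteTNorm}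

/-- The list of all Boolean assignments. -/
noncomputable def allAssign (N : ℕ) : List (Fin N → Bool) := (Finset.univ : Finset (Fin N → Bool)).toList

lemma mem_allAssign (f : Fin N → Bool) : f ∈ allAssign N :=
  Finset.mem_toList.2 (Finset.mem_univ f)

lemma taut_bot (ψ : BExp N) : Tautology .bot ψ := fun v hv => by simp [BExp.beval] at hv

/-- The disjunctive normal form list for `φ`. -/
noncomputable def dnf (φ : BExp N) : List (BExp N) :=
  ((allAssign N).filter fun f => φ.beval f).map cmec

lemma taut_dnf (φ : BExp N) : Tautology φ (disjList (dnf φ)) := by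
  intro v hv
  rw [beval_disjList]
  exact ⟨cmec v, List.mem_map.2 ⟨v, List.mem_filter.2 ⟨mem_allAssign v, hv⟩, rfl⟩,
    (beval_cmec v v).2 rfl⟩

lemma dnf_mem {φ : BExp N} {χ : BExp N} (h : χ ∈ dnf φ) :
    ∃ f : Fin N → Bool, χ = cmec f ∧ φ.beval f = true := by
  rcases List.mem_map.1 h with ⟨f, hf, rfl⟩
  exact ⟨f, rfl, (List.mem_filter.1 hf).2⟩

lemma cworld_nonempty (M : MCS T N) : Nonempty (CWorld M) := by
  by_contra hne
  have hall : ∀ f : Fin N → Bool, (LFml.gi (cmec f) T.one .bot) ∈ M.Δ := by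
    intro f
    rcases consW_or_bot M f with h | h
    · exact absurd ⟨⟨f, h⟩⟩ hne
    · exact h
  set L : List (BExp N) := (allAssign N).map cmec with hL
  have hprov : LAEProv T M.Δ (.gi (disjList L) T.one .bot) := by
    apply prov_disj_intro
    intro χ hχ
    rcases List.mem_map.1 hχ with ⟨f, _, rfl⟩
    exact .hyp (hall f)
  have htaut : Tautology (.top : BExp N) (disjList L) := by
    intro v _
    rw [beval_disjList]
    exact ⟨cmec v, List.mem_map.2 ⟨v, mem_allAssign v, rfl⟩, (beval_cmec v v).2 rfl⟩
  exact M.cons (gi_trans_left (.a1 htaut) hprov)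

noncomputable instance (M : MCS T N) : Nonempty (CWorld M) := cworld_nonempty M

/-- The canonical similarity space. -/
noncomputable def CSpace (M : MCS T N) : SimilaritySpace T (CWorld M) where
  S := CS M
  eq_one_iff := CS_eq_one_iff M
  symm := CS_symm M
  triangle := CS_triangle M

/-- The canonical evaluation. -/
def CEval (M : MCS T N) : LAEEval N (CWorld M) where
  e φ := {w | φ.beval w.1 = true}
  map_bot := by ext w; simp [BExp.beval]
  map_top := by ext w; simp [BExp.beval]
  map_and φ ψ := by ext w; simp [BExp.beval]
  map_or φ ψ := by ext w; simp [BExp.beval]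
  map_not φ := by ext w; simp [BExp.beval]
  separating := by
    intro v w hne
    have hvne : v.1 ≠ w.1 := fun h => hne (Subtype.ext h)
    rw [Function.ne_iff] at hvne
    obtain ⟨i, hi⟩ := hvne
    refine ⟨i, ?_⟩
    simp only [Set.mem_setOf_eq, BExp.beval]
    cases hv : v.1 i <;> cases hw : w.1 i <;> simp_all [Xor']

lemma mcs_disj_elim {M : MCS T N} {ε : BExp N} (hε : IsMec ε) {c : T.V} :
    ∀ l : List (BExp N), (LFml.gi ε c (disjList l)) ∈ M.Δ →
      (∃ φ ∈ l, (LFml.gi ε c φ) ∈ M.Δ) ∨ (LFml.gi ε c .bot) ∈ M.Δ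
  | [], h => Or.inr h
  | φ :: rest, h => by
      have h8 : (LFml.or (.gi ε c φ) (.gi ε c (disjList rest))) ∈ M.Δ :=
        mcs_mp h (mcs_mem_of_prov (.a8 φ (disjList rest) c hε))
      rcases mcs_or_iff.1 h8 with h' | h'
      · exact Or.inl ⟨φ, by simp, h'⟩
      · rcases mcs_disj_elim hε rest h' with ⟨χ, hχ, hm⟩ | hb
        · exact Or.inl ⟨χ, by simp [hχ], hm⟩
        · exact Or.inr hb

/-- A world of the canonical model is never `c`-close to the contradiction. -/
lemma cworld_not_bot {M : MCS T N} (w : CWorld M) {c : T.V}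
    (h : (LFml.gi (cmec w.1) c .bot) ∈ M.Δ) : False := by
  have h5 : (LFml.gi (cmec w.1) T.one .bot) ∈ M.Δ :=
    mcs_mp h (mcs_mem_of_prov (.a5 (cmec w.1) c))
  exact mcs_not_mem_iff.1 w.2 h5

/-- Truth lemma for graded implications. -/
lemma ctruth_gi (M : MCS T N) (φ ψ : BExp N) (c : T.V) :
    LAESat (CSpace M) (CEval M) (.gi φ c ψ) ↔ (LFml.gi φ c ψ) ∈ M.Δ := by
  constructor
  · -- semantic → membership
    intro h
    have hparts : ∀ χ ∈ dnf φ, LAEProv T M.Δ (.gi χ c ψ) := by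
      intro χ hχ
      obtain ⟨f, rfl, hf⟩ := dnf_mem hχ
      rcases consW_or_bot M f with hcons | hbot
      · have hfw : (⟨f, hcons⟩ : CWorld M) ∈ (CEval M).e φ := hf
        obtain ⟨a, ha, hS⟩ := h hfw
        have h1 : (LFml.gi (cmec f) (CS M ⟨f, hcons⟩ a) (cmec a.1)) ∈ M.Δ :=
          CS_mem M ⟨f, hcons⟩ a
        have h2 : LAEProv T M.Δ (.gi (cmec f) c (cmec a.1)) :=
          .mp (.hyp h1) (.a3 _ _ hS)
        exact gi_trans_right h2 (.a1 (taut_cmec_of_beval ha))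
      · have h1 : LAEProv T M.Δ (.gi (cmec f) T.one ψ) :=
          gi_trans_right (.hyp hbot) (.a1 (taut_bot ψ))
        exact .mp h1 (.a3 _ _ (tv_le_one c))
    have h2 : LAEProv T M.Δ (.gi (disjList (dnf φ)) c ψ) := prov_disj_intro hparts
    exact mcs_mem_of_prov (gi_trans_left (.a1 (taut_dnf φ)) h2)
  · -- membership → semantic
    intro h w hw
    have hw' : φ.beval w.1 = true := hw
    have h1 : LAEProv T M.Δ (.gi (cmec w.1) c ψ) :=
      gi_trans_left (.a1 (taut_cmec_of_beval hw')) (.hyp h)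
    have h2 : LAEProv T M.Δ (.gi (cmec w.1) c (disjList (dnf ψ))) :=
      gi_trans_right h1 (.a1 (taut_dnf ψ))
    rcases mcs_disj_elim (cmec_isMec w.1) (dnf ψ) (mcs_mem_of_prov h2) with ⟨χ, hχ, hm⟩ | hb
    · obtain ⟨g, rfl, hg⟩ := dnf_mem hχ
      rcases consW_or_bot M g with hcons | hbot
      · refine ⟨⟨g, hcons⟩, hg, ?_⟩
        exact CS_ge M w ⟨g, hcons⟩ hm
      · exact absurd (mcs_mem_of_prov (gi_trans_right (.hyp hm) (.hyp hbot)))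
          (fun hc => cworld_not_bot w hc)
    · exact absurd hb (fun hc => cworld_not_bot w hc)

/-- The truth lemma. -/
lemma ctruth (M : MCS T N) (Φ : LFml N T.V) :
    LAESat (CSpace M) (CEval M) Φ ↔ Φ ∈ M.Δ := by
  induction Φ with
  | gi φ c ψ => exact ctruth_gi M φ ψ c
  | and Φ Ψ ihΦ ihΨ =>
      show (LAESat _ _ Φ ∧ LAESat _ _ Ψ) ↔ _
      rw [ihΦ, ihΨ, mcs_and_iff]
  | or Φ Ψ ihΦ ihΨ =>
      show (LAESat _ _ Φ ∨ LAESat _ _ Ψ) ↔ _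
      rw [ihΦ, ihΨ, mcs_or_iff]
  | not Φ ihΦ =>
      show (¬ LAESat _ _ Φ) ↔ _
      rw [ihΦ, mcs_not_mem_iff.symm]

end LAEaux

theorem LAE_completeness {N : ℕ} (T : FiniteTNorm)
    (Th : Set (LFml N T.V)) (Φ : LFml N T.V) (h : LAEEntails T Th Φ) :
    LAEProv T Th Φ := by
  by_contra hnp
  obtain ⟨M, hsub⟩ := LAEaux.lindenbaum (LAEaux.consistent_of_not_prov hnp)
  have hsat : ∀ Ψ ∈ Th, LAESat (LAEaux.CSpace M) (LAEaux.CEval M) Ψ :=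
    fun Ψ hΨ => (LAEaux.ctruth M Ψ).2 (hsub (Or.inl hΨ))
  have hΦ : LAESat (LAEaux.CSpace M) (LAEaux.CEval M) Φ :=
    h (LAEaux.CWorld M) (LAEaux.CSpace M) (LAEaux.CEval M) hsat
  have hmem : Φ ∈ M.Δ := (LAEaux.ctruth M Φ).1 hΦ
  have hnot : Φ.not ∈ M.Δ := hsub (Or.inr rfl)
  exact LAEaux.mcs_not_mem_iff.1 hnot hmem

/-- Soundness and completeness of the Logic of Approximate Entailment:
`T ⊢_LAE Φ` iff `T ⊨_LAE Φ`. -/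
theorem LAE_soundness_and_completeness {N : ℕ} (hN : 0 < N) (T : FiniteTNorm)
    (Th : Set (LFml N T.V)) (Φ : LFml N T.V) :
    LAEProv T Th Φ ↔ LAEEntails T Th Φ :=
  ⟨LAE_soundness, LAE_completeness T Th Φ⟩
end

section
/- In a totally ordered similarity space (W,S,≤), for any subsets A, B of W and any c ∈ V: if A ⊆ U_c(B), then ◇≤A ⊆ U_c(◇≤B); the same statement holds with the upward closure ◇≥ in place of ◇≤. In particular, A ⊆ B implies ◇≤A ⊆ ◇≤B. -/
/-- In a totally ordered similarity space, if `A ⊆ U_c(B)` then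
`◇≤A ⊆ U_c(◇≤B)`, and likewise for `◇≥`; in particular `A ⊆ B` implies
`◇≤A ⊆ ◇≤B` (and `◇≥A ⊆ ◇≥B`). -/
theorem toss_nbhd_closure_mono {T : FiniteTNorm} {W : Type}
    [Fintype W] [Nonempty W] [LinearOrder W]
    (sp : TOSimilaritySpace T W) (A B : Set W) (c : T.V) :
    (A ⊆ sp.toSimilaritySpace.nbhd c B → dcl A ⊆ sp.toSimilaritySpace.nbhd c (dcl B)) ∧
    (A ⊆ sp.toSimilaritySpace.nbhd c B → ucl A ⊆ sp.toSimilaritySpace.nbhd c (ucl B)) ∧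
    (A ⊆ B → dcl A ⊆ dcl B) ∧ (A ⊆ B → ucl A ⊆ ucl B) := by
  have hc1 : (c : ℝ) ≤ 1 := (T.subset c.2).2
  have hSvv : ∀ v : W, (c : ℝ) ≤ (sp.S v v : ℝ) := by
    intro v
    have : sp.S v v = T.one := (sp.eq_one_iff v v).2 rfl
    rw [this]; exact hc1
  refine ⟨?_, ?_, ?_, ?_⟩
  · intro h v hv
    obtain ⟨w, hwA, hvw⟩ := hv
    obtain ⟨b, hbB, hcb⟩ := h hwA
    rcases le_total v b with hvb | hbv
    · exact ⟨v, ⟨b, hbB, hvb⟩, hSvv v⟩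
    · refine ⟨b, ⟨b, hbB, le_refl b⟩, ?_⟩
      have := (sp.compat b v w hbv hvw)
      have h1 : (sp.S b w : ℝ) ≤ (sp.S b v : ℝ) := le_trans this (min_le_left _ _)
      rw [sp.symm v b]
      calc (c : ℝ) ≤ (sp.S w b : ℝ) := hcb
        _ = (sp.S b w : ℝ) := by rw [sp.symm]
        _ ≤ _ := h1
  · intro h v hv
    obtain ⟨w, hwA, hwv⟩ := hv
    obtain ⟨b, hbB, hcb⟩ := h hwA
    rcases le_total b v with hbv | hvb
    · exact ⟨v, ⟨b, hbB, hbv⟩, hSvv v⟩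
    · refine ⟨b, ⟨b, hbB, le_refl b⟩, ?_⟩
      have := (sp.compat w v b hwv hvb)
      have h1 : (sp.S w b : ℝ) ≤ (sp.S v b : ℝ) := le_trans this (min_le_right _ _)
      exact le_trans hcb h1
  · intro h v ⟨w, hwA, hvw⟩; exact ⟨w, h hwA, hvw⟩
  · intro h v ⟨w, hwA, hwv⟩; exact ⟨w, h hwA, hwv⟩
end

section
/- Neighbourhoods commute with intersections of intervals: let (W,S,≤) be a totally ordered similarity space, let A and B be intervals of W with non-empty intersection, and let c ∈ V. Then U_c(A ∩ B) = U_c(A) ∩ U_c(B). -/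
/-- An interval `[u,v]` of the chain `W`. -/
def IsInterval {W : Type} [LinearOrder W] (A : Set W) : Prop :=
  ∃ u v : W, u ≤ v ∧ A = Set.Icc u v

lemma key_between {T : FiniteTNorm} {W : Type} [Fintype W] [Nonempty W] [LinearOrder W]
    (sp : TOSimilaritySpace T W) {w a x b : W} (h1 : a ≤ x) (h2 : x ≤ b) :
    min (sp.S w a : ℝ) (sp.S w b : ℝ) ≤ (sp.S w x : ℝ) := by
  rcases le_total w x with h | h
  · have hc := sp.compat w x b h h2
    exact le_trans (min_le_right _ _) (le_trans hc (min_le_left _ _))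
  · have hc := sp.compat a x w h1 h
    rw [sp.symm w a, sp.symm w x]
    exact le_trans (min_le_left _ _) (le_trans hc (min_le_right _ _))

/-- Neighbourhoods commute with intersections of intervals: for intervals
`A`, `B` with non-empty intersection, `U_c(A ∩ B) = U_c(A) ∩ U_c(B)`. -/
theorem toss_nbhd_inter_intervals {T : FiniteTNorm} {W : Type}
    [Fintype W] [Nonempty W] [LinearOrder W]
    (sp : TOSimilaritySpace T W) (A B : Set W)
    (hA : IsInterval A) (hB : IsInterval B) (hAB : (A ∩ B).Nonempty) (c : T.V) :
    sp.toSimilaritySpace.nbhd c (A ∩ B) =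
      sp.toSimilaritySpace.nbhd c A ∩ sp.toSimilaritySpace.nbhd c B := by
  ext w
  simp only [SimilaritySpace.nbhd, Set.mem_inter_iff, Set.mem_setOf_eq]
  constructor
  · rintro ⟨x, ⟨hxA, hxB⟩, h⟩
    exact ⟨⟨x, hxA, h⟩, ⟨x, hxB, h⟩⟩
  · rintro ⟨⟨a, ha, hca⟩, ⟨b, hb, hcb⟩⟩
    obtain ⟨p, hpA, hpB⟩ := hAB
    obtain ⟨u1, v1, -, rfl⟩ := hA
    obtain ⟨u2, v2, -, rfl⟩ := hB
    simp only [Set.mem_Icc, Set.mem_inter_iff] at ha hb hpA hpB ⊢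
    rcases le_total a b with hab | hab
    · rcases le_total p a with hpa | hpa
      · exact ⟨a, ⟨ha, ⟨le_trans hpB.1 hpa, le_trans hab hb.2⟩⟩, hca⟩
      · rcases le_total p b with hpb | hpb
        · exact ⟨p, ⟨hpA, hpB⟩, le_trans (le_min hca hcb) (key_between sp hpa hpb)⟩
        · exact ⟨b, ⟨⟨le_trans ha.1 hab, le_trans hpb hpA.2⟩, hb⟩, hcb⟩
    · rcases le_total p b with hpb | hpb
      · exact ⟨b, ⟨⟨le_trans hpA.1 hpb, le_trans hab ha.2⟩, hb⟩, hcb⟩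
      · rcases le_total p a with hpa | hpa
        · exact ⟨p, ⟨hpA, hpB⟩, le_trans (le_min hcb hca) (key_between sp hpb hpa)⟩
        · exact ⟨a, ⟨ha, ⟨le_trans hb.1 hab, le_trans hpa hpB.2⟩⟩, hca⟩
end

section
/- In a component-wise ordered similarity space, for any non-empty subset A of W, the diamond ◇≤A equals the intersection, over all indices i and all elements w_i ∈ W_i such that A ⊆ π(◇≤_i{w_i}), of the sets π(◇≤_i{w_i}); here ◇≤_i denotes the downward closure in the chain (W_i, ⊑_i). -/
/-- The similarity on the product `W = ∏ i, W i` of totally ordered similarity spaces: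
`S(v,w) = min_i S_i(v_i, w_i)`. -/
noncomputable def prodS {T : FiniteTNorm} {M : ℕ} {W : Fin M → Type}
    [∀ i, Fintype (W i)] [∀ i, Nonempty (W i)] [∀ i, LinearOrder (W i)]
    (hM : 0 < M) (sps : ∀ i, TOSimilaritySpace T (W i))
    (v w : ∀ i, W i) : T.V :=
  haveI : Nonempty (Fin M) := ⟨⟨0, hM⟩⟩
  Finset.univ.inf' Finset.univ_nonempty fun i => (sps i).S (v i) (w i)

/-- The `c`-neighbourhood in a component-wise ordered similarity space. -/
def pNbhd {T : FiniteTNorm} {M : ℕ} {W : Fin M → Type}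
    [∀ i, Fintype (W i)] [∀ i, Nonempty (W i)] [∀ i, LinearOrder (W i)]
    (hM : 0 < M) (sps : ∀ i, TOSimilaritySpace T (W i))
    (c : T.V) (A : Set (∀ i, W i)) : Set (∀ i, W i) :=
  {w | ∃ a ∈ A, (c : ℝ) ≤ (prodS hM sps w a : ℝ)}

/-- `◇≤A` in a component-wise ordered similarity space. -/
def pDcl {M : ℕ} {W : Fin M → Type} [∀ i, LinearOrder (W i)]
    (A : Set (∀ i, W i)) : Set (∀ i, W i) :=
  {w | ∀ i, ∃ v ∈ A, w i ≤ v i}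

/-- `◇≥A` in a component-wise ordered similarity space. -/
def pUcl {M : ℕ} {W : Fin M → Type} [∀ i, LinearOrder (W i)]
    (A : Set (∀ i, W i)) : Set (∀ i, W i) :=
  {w | ∀ i, ∃ v ∈ A, v i ≤ w i}

/-- The cylindrical extension `πC` of a subset `C` of the `i`-th component. -/
def cyl {M : ℕ} {W : Fin M → Type} (i : Fin M) (C : Set (W i)) : Set (∀ j, W j) :=
  {w | w i ∈ C}

/-- The cylindrical extension `πA` of a subset `A` of the partial product over the
block of coordinates `I`. -/
def cylOn {M : ℕ} {W : Fin M → Type} (I : Finset (Fin M))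
    (A : Set (∀ i : {x // x ∈ I}, W i.1)) : Set (∀ i, W i) :=
  {w | (fun i : {x // x ∈ I} => w i.1) ∈ A}

/-- In a component-wise ordered similarity space, for non-empty `A`,
`◇≤A` is the intersection, over all `i` and all `x ∈ Wᵢ` with `A ⊆ π(◇≤ᵢ{x})`, of the
sets `π(◇≤ᵢ{x})`. -/
theorem pDcl_eq_iInter {T : FiniteTNorm} {M : ℕ} {W : Fin M → Type}
    [∀ i, Fintype (W i)] [∀ i, Nonempty (W i)] [∀ i, LinearOrder (W i)]
    (hM : 0 < M) (sps : ∀ i, TOSimilaritySpace T (W i))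
    (A : Set (∀ i, W i)) (hA : A.Nonempty) :
    pDcl A = ⋂ (i : Fin M), ⋂ (x : W i), ⋂ (_ : A ⊆ cyl i (dcl {x})), cyl i (dcl {x}) := by
  ext w
  simp only [pDcl, Set.mem_setOf_eq, Set.mem_iInter, cyl, dcl, Set.mem_singleton_iff]
  constructor
  · rintro h i x hx
    obtain ⟨v, hv, hle⟩ := h i
    obtain ⟨y, hy, hvy⟩ := hx hv
    exact ⟨y, hy, le_trans hle hvy⟩
  · intro h i
    obtain ⟨v0, hv0, hmax⟩ := Set.exists_max_image A (fun v => v i) A.toFinite hA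
    obtain ⟨y, hy, hwy⟩ := h i (v0 i) (fun v hv => ⟨v0 i, rfl, hmax v hv⟩)
    exact ⟨v0, hv0, hy ▸ hwy⟩
end

section
/- In a component-wise ordered similarity space, for any subsets A, B of W and any c ∈ V: if A ⊆ U_c(B), then ◇≤A ⊆ U_c(◇≤B); the same statement holds with ◇≥ in place of ◇≤. In particular, A ⊆ B implies ◇≤A ⊆ ◇≤B. -/
/-- In a component-wise ordered similarity space, if `A ⊆ U_c(B)` then
`◇≤A ⊆ U_c(◇≤B)`, and likewise for `◇≥`; in particular `A ⊆ B` implies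
`◇≤A ⊆ ◇≤B` (and `◇≥A ⊆ ◇≥B`). -/
theorem pdiamond_nbhd_mono {T : FiniteTNorm} {M : ℕ} {W : Fin M → Type}
    [∀ i, Fintype (W i)] [∀ i, Nonempty (W i)] [∀ i, LinearOrder (W i)]
    (hM : 0 < M) (sps : ∀ i, TOSimilaritySpace T (W i))
    (A B : Set (∀ i, W i)) (c : T.V) :
    (A ⊆ pNbhd hM sps c B → pDcl A ⊆ pNbhd hM sps c (pDcl B)) ∧
    (A ⊆ pNbhd hM sps c B → pUcl A ⊆ pNbhd hM sps c (pUcl B)) ∧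
    (A ⊆ B → pDcl A ⊆ pDcl B) ∧ (A ⊆ B → pUcl A ⊆ pUcl B) := by
  classical
  haveI : Nonempty (Fin M) := ⟨⟨0, hM⟩⟩
  have hc1 : (c : ℝ) ≤ 1 := (T.subset c.2).2
  have hS1 : ∀ (i : Fin M) (x : W i), (((sps i).S x x : T.V) : ℝ) = 1 := by
    intro i x
    have := ((sps i).eq_one_iff x x).mpr rfl
    rw [this]; rfl
  have hle : ∀ (v w : ∀ i, W i) (i : Fin M),
      ((prodS hM sps v w : T.V) : ℝ) ≤ (((sps i).S (v i) (w i) : T.V) : ℝ) := by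
    intro v w i
    exact_mod_cast Finset.inf'_le _ (Finset.mem_univ i)
  have hge : ∀ (v w : ∀ i, W i),
      (∀ i, (c : ℝ) ≤ (((sps i).S (v i) (w i) : T.V) : ℝ)) →
      (c : ℝ) ≤ ((prodS hM sps v w : T.V) : ℝ) := by
    intro v w h
    have : c ≤ Finset.univ.inf' Finset.univ_nonempty fun i => (sps i).S (v i) (w i) :=
      Finset.le_inf' _ _ fun i _ => h i
    exact_mod_cast this
  refine ⟨?_, ?_, ?_, ?_⟩
  · -- dcl with nbhd
    intro hAB w hw
    choose v hvA hvle using hw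
    have hv : ∀ i, ∃ b ∈ B, (c : ℝ) ≤ ((prodS hM sps (v i) b : T.V) : ℝ) :=
      fun i => hAB (hvA i)
    choose b hbB hbc using hv
    refine ⟨fun i => min (w i) (b i i), fun i => ⟨b i, hbB i, min_le_right _ _⟩, ?_⟩
    refine hge _ _ fun i => ?_
    rcases le_total (w i) (b i i) with h | h
    · rw [min_eq_left h, hS1]; exact hc1
    · rw [min_eq_right h]
      have h1 : (c : ℝ) ≤ (((sps i).S (v i i) (b i i) : T.V) : ℝ) :=
        le_trans (hbc i) (hle _ _ i)
      have h2 := (sps i).compat (b i i) (w i) (v i i) h (hvle i)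
      rw [(sps i).symm (b i i) (v i i)] at h2
      rw [(sps i).symm (w i) (b i i)]
      exact le_trans h1 (le_trans h2 (min_le_left _ _))
  · -- ucl with nbhd
    intro hAB w hw
    choose v hvA hvle using hw
    have hv : ∀ i, ∃ b ∈ B, (c : ℝ) ≤ ((prodS hM sps (v i) b : T.V) : ℝ) :=
      fun i => hAB (hvA i)
    choose b hbB hbc using hv
    refine ⟨fun i => max (w i) (b i i), fun i => ⟨b i, hbB i, le_max_right _ _⟩, ?_⟩
    refine hge _ _ fun i => ?_
    rcases le_total (b i i) (w i) with h | h
    · rw [max_eq_left h, hS1]; exact hc1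
    · rw [max_eq_right h]
      have h1 : (c : ℝ) ≤ (((sps i).S (v i i) (b i i) : T.V) : ℝ) :=
        le_trans (hbc i) (hle _ _ i)
      have h2 := (sps i).compat (v i i) (w i) (b i i) (hvle i) h
      exact le_trans h1 (le_trans h2 (min_le_right _ _))
  · intro hAB w hw i
    obtain ⟨x, hx, hxl⟩ := hw i
    exact ⟨x, hAB hx, hxl⟩
  · intro hAB w hw i
    obtain ⟨x, hx, hxl⟩ := hw i
    exact ⟨x, hAB hx, hxl⟩
end

section
/- In a component-wise ordered similarity space, neighbourhood inclusions factor over disjoint coordinate blocks: let 1 ≤ i_1 < … < i_k ≤ M and 1 ≤ j_1 < … < j_l ≤ M with {i_1,…,i_k} and {j_1,…,j_l} disjoint, let A, C ⊆ W_{i_1} × … × W_{i_k} and B, D ⊆ W_{j_1} × … × W_{j_l} all be non-empty, and let c ∈ V. Then πA ⊆ U_c(πC) and πB ⊆ U_c(πD) hold if and only if π(A × B) ⊆ U_c(π(C × D)). -/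
lemma le_prodS_iff {T : FiniteTNorm} {M : ℕ} {W : Fin M → Type}
    [∀ i, Fintype (W i)] [∀ i, Nonempty (W i)] [∀ i, LinearOrder (W i)]
    (hM : 0 < M) (sps : ∀ i, TOSimilaritySpace T (W i)) (c : T.V) (v w : ∀ i, W i) :
    (c : ℝ) ≤ (prodS hM sps v w : ℝ) ↔ ∀ i, (c : ℝ) ≤ ((sps i).S (v i) (w i) : ℝ) := by
  rw [show ((c : ℝ) ≤ (prodS hM sps v w : ℝ)) ↔ c ≤ prodS hM sps v w from Iff.rfl]
  unfold prodS
  rw [Finset.le_inf'_iff]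
  simp [Subtype.coe_le_coe]

lemma S_self_one {T : FiniteTNorm} {W : Type} [Fintype W] [Nonempty W]
    (sp : SimilaritySpace T W) (u : W) : ((sp.S u u : T.V) : ℝ) = 1 := by
  have := (sp.eq_one_iff u u).mpr rfl
  rw [this]; rfl

lemma c_le_one {T : FiniteTNorm} (c : T.V) : (c : ℝ) ≤ 1 := (T.subset c.2).2

/-- In a component-wise ordered similarity space, neighbourhood inclusions
factor over disjoint coordinate blocks: for non-empty `A, C` over block `I` and non-empty
`B, D` over a disjoint block `J`, `πA ⊆ U_c(πC)` and `πB ⊆ U_c(πD)` iff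
`π(A × B) ⊆ U_c(π(C × D))` (the cylindrical extension of a product over disjoint blocks
being the intersection of the cylindrical extensions). -/
theorem pNbhd_factor_blocks {T : FiniteTNorm} {M : ℕ} {W : Fin M → Type}
    [∀ i, Fintype (W i)] [∀ i, Nonempty (W i)] [∀ i, LinearOrder (W i)]
    (hM : 0 < M) (sps : ∀ i, TOSimilaritySpace T (W i))
    (I J : Finset (Fin M)) (hI : I.Nonempty) (hJ : J.Nonempty) (hIJ : Disjoint I J)
    (A C : Set (∀ i : {x // x ∈ I}, W i.1)) (B D : Set (∀ j : {x // x ∈ J}, W j.1))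
    (hA : A.Nonempty) (hB : B.Nonempty) (hC : C.Nonempty) (hD : D.Nonempty)
    (c : T.V) :
    (cylOn I A ⊆ pNbhd hM sps c (cylOn I C) ∧ cylOn J B ⊆ pNbhd hM sps c (cylOn J D)) ↔
      cylOn I A ∩ cylOn J B ⊆ pNbhd hM sps c (cylOn I C ∩ cylOn J D) := by
  have dIJ : ∀ {i : Fin M}, i ∈ I → i ∉ J := fun h => Finset.disjoint_left.mp hIJ h
  constructor
  · rintro ⟨h1, h2⟩ w ⟨hwA, hwB⟩
    obtain ⟨a, haC, hwa⟩ := h1 hwA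
    obtain ⟨b, hbD, hwb⟩ := h2 hwB
    rw [le_prodS_iff] at hwa hwb
    set z : ∀ i, W i := fun i => if h : i ∈ I then a i else if h' : i ∈ J then b i else w i
      with hz
    refine ⟨z, ⟨?_, ?_⟩, ?_⟩
    · show (fun i : {x // x ∈ I} => z i.1) ∈ C
      have he : (fun i : {x // x ∈ I} => z i.1) = fun i : {x // x ∈ I} => a i.1 := by
        funext i; simp [hz, i.2]
      rw [he]; exact haC
    · show (fun j : {x // x ∈ J} => z j.1) ∈ D
      have he : (fun j : {x // x ∈ J} => z j.1) = fun j : {x // x ∈ J} => b j.1 := by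
        funext j
        have hnI : j.1 ∉ I := fun h => dIJ h j.2
        simp [hz, hnI, j.2]
      rw [he]; exact hbD
    · rw [le_prodS_iff]
      intro i
      by_cases h : i ∈ I
      · simpa [hz, h] using hwa i
      · by_cases h' : i ∈ J
        · simpa [hz, h, h'] using hwb i
        · simpa [hz, h, h', S_self_one] using c_le_one c
  · intro h
    constructor
    · intro w hwA
      obtain ⟨b, hbB⟩ := hB
      set w' : ∀ i, W i := fun i => if h' : i ∈ J then b ⟨i, h'⟩ else w i with hw'
      have hw'A : w' ∈ cylOn I A := by
        show (fun i : {x // x ∈ I} => w' i.1) ∈ A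
        have he : (fun i : {x // x ∈ I} => w' i.1) = fun i : {x // x ∈ I} => w i.1 := by
          funext i
          have hnJ : i.1 ∉ J := fun hh => dIJ i.2 hh
          simp [hw', hnJ]
        rw [he]; exact hwA
      have hw'B : w' ∈ cylOn J B := by
        show (fun j : {x // x ∈ J} => w' j.1) ∈ B
        have he : (fun j : {x // x ∈ J} => w' j.1) = b := by
          funext j; simp [hw', j.2]
        rw [he]; exact hbB
      obtain ⟨z, ⟨hzC, _⟩, hwz⟩ := h ⟨hw'A, hw'B⟩
      rw [le_prodS_iff] at hwz
      set z' : ∀ i, W i := fun i => if h' : i ∈ I then z i else w i with hz'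
      refine ⟨z', ?_, ?_⟩
      · show (fun i : {x // x ∈ I} => z' i.1) ∈ C
        have he : (fun i : {x // x ∈ I} => z' i.1) = fun i : {x // x ∈ I} => z i.1 := by
          funext i; simp [hz', i.2]
        rw [he]; exact hzC
      · rw [le_prodS_iff]
        intro i
        by_cases h' : i ∈ I
        · have hnJ : i ∉ J := fun hh => dIJ h' hh
          simpa [hz', h', hw', hnJ] using hwz i
        · simpa [hz', h', S_self_one] using c_le_one c
    · intro w hwB
      obtain ⟨a, haA⟩ := hA
      set w' : ∀ i, W i := fun i => if h' : i ∈ I then a ⟨i, h'⟩ else w i with hw'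
      have hw'B : w' ∈ cylOn J B := by
        show (fun j : {x // x ∈ J} => w' j.1) ∈ B
        have he : (fun j : {x // x ∈ J} => w' j.1) = fun j : {x // x ∈ J} => w j.1 := by
          funext j
          have hnI : j.1 ∉ I := fun hh => dIJ hh j.2
          simp [hw', hnI]
        rw [he]; exact hwB
      have hw'A : w' ∈ cylOn I A := by
        show (fun i : {x // x ∈ I} => w' i.1) ∈ A
        have he : (fun i : {x // x ∈ I} => w' i.1) = a := by
          funext i; simp [hw', i.2]
        rw [he]; exact haA
      obtain ⟨z, ⟨_, hzD⟩, hwz⟩ := h ⟨hw'A, hw'B⟩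
      rw [le_prodS_iff] at hwz
      set z' : ∀ i, W i := fun i => if h' : i ∈ J then z i else w i with hz'
      refine ⟨z', ?_, ?_⟩
      · show (fun j : {x // x ∈ J} => z' j.1) ∈ D
        have he : (fun j : {x // x ∈ J} => z' j.1) = fun j : {x // x ∈ J} => z j.1 := by
          funext j; simp [hz', j.2]
        rw [he]; exact hzD
      · rw [le_prodS_iff]
        intro i
        by_cases h' : i ∈ J
        · have hnI : i ∉ I := fun hh => dIJ hh h'
          simpa [hz', h', hw', hnI] using hwz i
        · simpa [hz', h', S_self_one] using c_le_one c
end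

section
/- In a component-wise ordered similarity space, emptiness of intersections with the diamond of a set decomposes over disjoint coordinate blocks: let 1 ≤ i_1 < … < i_k ≤ M and 1 ≤ j_1 < … < j_l ≤ M with {i_1,…,i_k} and {j_1,…,j_l} disjoint, let A ⊆ W, B ⊆ W_{i_1} × … × W_{i_k} and C ⊆ W_{j_1} × … × W_{j_l}. Then ◇≤A ∩ πB ∩ πC = ∅ if and only if ◇≤A ∩ πB = ∅ or ◇≤A ∩ πC = ∅; the analogous statement holds with ◇≥ in place of ◇≤. -/
lemma aux_blocks_empty {M : ℕ} {W : Fin M → Type}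
    (I J : Finset (Fin M)) (hIJ : Disjoint I J)
    (D : Set (∀ i, W i))
    (hD : ∀ w u : (∀ i, W i), w ∈ D → u ∈ D →
      (fun i => if i ∈ J then u i else w i) ∈ D)
    (B : Set (∀ i : {x // x ∈ I}, W i.1)) (C : Set (∀ j : {x // x ∈ J}, W j.1)) :
    D ∩ cylOn I B ∩ cylOn J C = ∅ ↔ D ∩ cylOn I B = ∅ ∨ D ∩ cylOn J C = ∅ := by
  constructor
  · intro h
    by_contra hc
    push_neg at hc
    obtain ⟨h1, h2⟩ := hc
    obtain ⟨w, hwD, hwB⟩ := h1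
    obtain ⟨u, huD, huC⟩ := h2
    set z : ∀ i, W i := fun i => if i ∈ J then u i else w i with hz
    have hzB : z ∈ cylOn I B := by
      have he : (fun i : {x // x ∈ I} => z i.1) = fun i : {x // x ∈ I} => w i.1 := by
        funext i
        simp [hz, Finset.disjoint_left.mp hIJ i.2]
      simpa [cylOn, he] using hwB
    have hzC : z ∈ cylOn J C := by
      have he : (fun j : {x // x ∈ J} => z j.1) = fun j : {x // x ∈ J} => u j.1 := by
        funext j
        simp [hz, j.2]
      simpa [cylOn, he] using huC
    have hmem : z ∈ D ∩ cylOn I B ∩ cylOn J C := ⟨⟨hD w u hwD huD, hzB⟩, hzC⟩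
    rw [h] at hmem
    exact hmem
  · rintro (h | h) <;> rw [Set.eq_empty_iff_forall_notMem] at h ⊢ <;>
      rintro x ⟨⟨hx1, hx2⟩, hx3⟩
    · exact h x ⟨hx1, hx2⟩
    · exact h x ⟨hx1, hx3⟩

/-- In a component-wise ordered similarity space, emptiness of
intersections with the diamond of a set decomposes over disjoint coordinate blocks:
`◇≤A ∩ πB ∩ πC = ∅` iff `◇≤A ∩ πB = ∅` or `◇≤A ∩ πC = ∅`; likewise for `◇≥`. -/
theorem pdiamond_inter_blocks_empty {T : FiniteTNorm} {M : ℕ} {W : Fin M → Type}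
    [∀ i, Fintype (W i)] [∀ i, Nonempty (W i)] [∀ i, LinearOrder (W i)]
    (hM : 0 < M) (sps : ∀ i, TOSimilaritySpace T (W i))
    (I J : Finset (Fin M)) (hI : I.Nonempty) (hJ : J.Nonempty) (hIJ : Disjoint I J)
    (A : Set (∀ i, W i))
    (B : Set (∀ i : {x // x ∈ I}, W i.1)) (C : Set (∀ j : {x // x ∈ J}, W j.1)) :
    (pDcl A ∩ cylOn I B ∩ cylOn J C = ∅ ↔
      pDcl A ∩ cylOn I B = ∅ ∨ pDcl A ∩ cylOn J C = ∅) ∧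
    (pUcl A ∩ cylOn I B ∩ cylOn J C = ∅ ↔
      pUcl A ∩ cylOn I B = ∅ ∨ pUcl A ∩ cylOn J C = ∅) := by
  constructor
  · refine aux_blocks_empty I J hIJ (pDcl A) ?_ B C
    intro w u hw hu i
    by_cases hi : i ∈ J
    · obtain ⟨v, hv, hle⟩ := hu i
      exact ⟨v, hv, by simpa [hi] using hle⟩
    · obtain ⟨v, hv, hle⟩ := hw i
      exact ⟨v, hv, by simpa [hi] using hle⟩
  · refine aux_blocks_empty I J hIJ (pUcl A) ?_ B C
    intro w u hw hu i
    by_cases hi : i ∈ J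
    · obtain ⟨v, hv, hle⟩ := hu i
      exact ⟨v, hv, by simpa [hi] using hle⟩
    · obtain ⟨v, hv, hle⟩ := hw i
      exact ⟨v, hv, by simpa [hi] using hle⟩
end

section
/- In a component-wise ordered similarity space, for any index i, any A ⊆ W_i and any B ⊆ W: if πA ∩ ◇≤B = ∅, then ◇≥(πA) ∩ ◇≤B = ∅; similarly, if πA ∩ ◇≥B = ∅, then ◇≤(πA) ∩ ◇≥B = ∅. -/
/-- In a component-wise ordered similarity space, for `A ⊆ Wᵢ` and
`B ⊆ W`: if `πA ∩ ◇≤B = ∅` then `◇≥(πA) ∩ ◇≤B = ∅`, and if `πA ∩ ◇≥B = ∅` then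
`◇≤(πA) ∩ ◇≥B = ∅`. -/
theorem pdiamond_cyl_disjointness {T : FiniteTNorm} {M : ℕ} {W : Fin M → Type}
    [∀ i, Fintype (W i)] [∀ i, Nonempty (W i)] [∀ i, LinearOrder (W i)]
    (hM : 0 < M) (sps : ∀ i, TOSimilaritySpace T (W i))
    (i : Fin M) (A : Set (W i)) (B : Set (∀ j, W j)) :
    (cyl i A ∩ pDcl B = ∅ → pUcl (cyl i A) ∩ pDcl B = ∅) ∧
    (cyl i A ∩ pUcl B = ∅ → pDcl (cyl i A) ∩ pUcl B = ∅) := by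
  constructor
  · intro h
    ext w
    simp only [Set.mem_inter_iff, Set.mem_empty_iff_false, iff_false, not_and]
    rintro hu hd
    obtain ⟨v, hvA, hvi⟩ := hu i
    have hmem : Function.update w i (v i) ∈ cyl i A ∩ pDcl B := by
      constructor
      · show Function.update w i (v i) i ∈ A
        simpa using (show v i ∈ A from hvA)
      · intro j
        obtain ⟨b, hb, hwb⟩ := hd j
        refine ⟨b, hb, ?_⟩
        by_cases hij : j = i
        · subst hij; simpa using le_trans hvi hwb
        · simpa [Function.update_of_ne hij] using hwb
    rw [h] at hmem; exact hmem
  · intro h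
    ext w
    simp only [Set.mem_inter_iff, Set.mem_empty_iff_false, iff_false, not_and]
    rintro hu hd
    obtain ⟨v, hvA, hvi⟩ := hu i
    have hmem : Function.update w i (v i) ∈ cyl i A ∩ pUcl B := by
      constructor
      · show Function.update w i (v i) i ∈ A
        simpa using (show v i ∈ A from hvA)
      · intro j
        obtain ⟨b, hb, hwb⟩ := hd j
        refine ⟨b, hb, ?_⟩
        by_cases hij : j = i
        · subst hij; simpa using le_trans hwb hvi
        · simpa [Function.update_of_ne hij] using hwb
    rw [h] at hmem; exact hmem
end
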